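/- For every natural number n ≥ 1, cof([ℵ_n]^ℵ₀) = ℵ_n. -/

import Mathlib

open Set Filter

universe u

/-- Least cardinality of a cofinal subset of a preorder. -/
noncomputable def poCof (α : Type u) [Preorder α] : Cardinal.{u} :=
  sInf { c | ∃ S : Set α, (∀ a : α, ∃ b ∈ S, a ≤ b) ∧ Cardinal.mk S = c }

/-- `cof([X]^ℵ₀)`: cofinality of the family of countably infinite subsets of `X`,
ordered by inclusion. -/
noncomputable def ctblCof (X : Type u) : Cardinal.{u} :=
  poCof { A : Set X // A.Countable ∧ A.Infinite }

/-- The dominating number 𝔡. -/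
noncomputable def dNum : Cardinal :=
  sInf { c | ∃ D : Set (ℕ → ℕ),
    (∀ f : ℕ → ℕ, ∃ g ∈ D, ∀ᶠ n in atTop, f n ≤ g n) ∧ Cardinal.mk D = c }

/-- The unbounding number 𝔟. -/
noncomputable def bNum : Cardinal :=
  sInf { c | ∃ B : Set (ℕ → ℕ),
    (∀ g : ℕ → ℕ, ∃ f ∈ B, ¬ ∀ᶠ n in atTop, f n ≤ g n) ∧ Cardinal.mk B = c }

/-- An almost disjoint family on ℕ. -/
def AlmostDisjoint (𝒜 : Set (Set ℕ)) : Prop :=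
  (∀ A ∈ 𝒜, A.Infinite) ∧ ∀ A ∈ 𝒜, ∀ B ∈ 𝒜, A ≠ B → (A ∩ B).Finite

/-- The underlying set of the Isbell–Mrówka space `Ψ(𝒜) = ℕ ∪ 𝒜`. -/
abbrev PsiSpace (𝒜 : Set (Set ℕ)) : Type := ℕ ⊕ ↥𝒜

/-- The Isbell–Mrówka topology: naturals are isolated, and basic neighborhoods
of `A ∈ 𝒜` are `{A} ∪ (A \ F)` for finite `F`. -/
instance psiTop (𝒜 : Set (Set ℕ)) : TopologicalSpace (PsiSpace 𝒜) where
  IsOpen U := ∀ A : 𝒜, Sum.inr A ∈ U → { n : ℕ | n ∈ (A : Set ℕ) ∧ Sum.inl n ∉ U }.Finite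
  isOpen_univ := by
    intro A _
    convert Set.finite_empty using 1
    ext n; simp
  isOpen_inter := by
    intro U V hU hV A hA
    apply ((hU A hA.1).union (hV A hA.2)).subset
    rintro n ⟨h1, h2⟩
    by_cases h : Sum.inl n ∈ U
    · exact Or.inr ⟨h1, fun hv => h2 ⟨h, hv⟩⟩
    · exact Or.inl ⟨h1, h⟩
  isOpen_sUnion := by
    intro s hs A hA
    obtain ⟨t, ht, hAt⟩ := hA
    apply (hs t ht A hAt).subset
    rintro n ⟨h1, h2⟩
    exact ⟨h1, fun h => h2 ⟨t, ht, h⟩⟩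

/-- `st(S, 𝒰) = ⋃ {U ∈ 𝒰 : U ∩ S ≠ ∅}`. -/
def starSet {X : Type*} (S : Set X) (𝒰 : Set (Set X)) : Set X :=
  ⋃₀ { U ∈ 𝒰 | (U ∩ S).Nonempty }

def StarMenger (X : Type*) [TopologicalSpace X] : Prop :=
  ∀ 𝒰 : ℕ → Set (Set X), (∀ n, ∀ U ∈ 𝒰 n, IsOpen U) → (∀ n, ⋃₀ 𝒰 n = univ) →
    ∃ ℱ : ℕ → Set (Set X), (∀ n, ℱ n ⊆ 𝒰 n ∧ (ℱ n).Finite) ∧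
      (⋃ n, starSet (⋃₀ ℱ n) (𝒰 n)) = univ

def StarHurewicz (X : Type*) [TopologicalSpace X] : Prop :=
  ∀ 𝒰 : ℕ → Set (Set X), (∀ n, ∀ U ∈ 𝒰 n, IsOpen U) → (∀ n, ⋃₀ 𝒰 n = univ) →
    ∃ ℱ : ℕ → Set (Set X), (∀ n, ℱ n ⊆ 𝒰 n ∧ (ℱ n).Finite) ∧
      ∀ x : X, ∀ᶠ n in atTop, x ∈ starSet (⋃₀ ℱ n) (𝒰 n)

def StarRothberger (X : Type*) [TopologicalSpace X] : Prop :=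
  ∀ 𝒰 : ℕ → Set (Set X), (∀ n, ∀ U ∈ 𝒰 n, IsOpen U) → (∀ n, ⋃₀ 𝒰 n = univ) →
    ∃ U : ℕ → Set X, (∀ n, U n ∈ 𝒰 n) ∧ (⋃ n, starSet (U n) (𝒰 n)) = univ

def StronglyStarMenger (X : Type*) [TopologicalSpace X] : Prop :=
  ∀ 𝒰 : ℕ → Set (Set X), (∀ n, ∀ U ∈ 𝒰 n, IsOpen U) → (∀ n, ⋃₀ 𝒰 n = univ) →
    ∃ F : ℕ → Set X, (∀ n, (F n).Finite) ∧ (⋃ n, starSet (F n) (𝒰 n)) = univ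

def StronglyStarHurewicz (X : Type*) [TopologicalSpace X] : Prop :=
  ∀ 𝒰 : ℕ → Set (Set X), (∀ n, ∀ U ∈ 𝒰 n, IsOpen U) → (∀ n, ⋃₀ 𝒰 n = univ) →
    ∃ F : ℕ → Set X, (∀ n, (F n).Finite) ∧
      ∀ x : X, ∀ᶠ n in atTop, x ∈ starSet (F n) (𝒰 n)

/-- Pull back a cofinal family of countable sets along an injection. -/
lemma myPull {X Y : Type u} (f : X ↪ Y) (c : Cardinal.{u})
    (h : ∃ S : Set (Set Y), Cardinal.mk S ≤ c ∧ (∀ s ∈ S, s.Countable) ∧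
      ∀ A : Set Y, A.Countable → ∃ B ∈ S, A ⊆ B) :
    ∃ S : Set (Set X), Cardinal.mk S ≤ c ∧ (∀ s ∈ S, s.Countable) ∧
      ∀ A : Set X, A.Countable → ∃ B ∈ S, A ⊆ B := by
  obtain ⟨S, h1, h2, h3⟩ := h
  refine ⟨(fun B => f ⁻¹' B) '' S, (Cardinal.mk_image_le).trans h1, ?_, ?_⟩
  · rintro s ⟨B, hB, rfl⟩
    exact (h2 B hB).preimage f.injective
  · intro A hA
    obtain ⟨B, hB, hAB⟩ := h3 (f '' A) (hA.image f)
    exact ⟨f ⁻¹' B, Set.mem_image_of_mem _ hB, Set.image_subset_iff.mp hAB⟩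

lemma myKey (n : ℕ) : ∀ (X : Type u), Cardinal.mk X ≤ Cardinal.aleph n →
    ∃ S : Set (Set X), Cardinal.mk S ≤ Cardinal.aleph n ∧ (∀ s ∈ S, s.Countable) ∧
      ∀ A : Set X, A.Countable → ∃ B ∈ S, A ⊆ B := by
  induction n with
  | zero =>
    intro X hX
    rw [show ((0 : ℕ) : Ordinal) = 0 by simp, Cardinal.aleph_zero] at hX
    haveI : Countable X := Cardinal.mk_le_aleph0_iff.mp hX
    refine ⟨{Set.univ}, ?_, ?_, ?_⟩
    · rw [Cardinal.mk_singleton, show ((0 : ℕ) : Ordinal) = 0 by simp, Cardinal.aleph_zero]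
      exact Cardinal.one_lt_aleph0.le
    · rintro s rfl
      exact Set.countable_univ
    · intro A _
      exact ⟨Set.univ, rfl, Set.subset_univ A⟩
  | succ n ih =>
    intro X hX
    by_cases h : Cardinal.mk X ≤ Cardinal.aleph n
    · obtain ⟨S, h1, h2, h3⟩ := ih X h
      exact ⟨S, h1.trans (Cardinal.aleph_le_aleph.mpr (by exact_mod_cast Nat.le_succ n)), h2, h3⟩
    · set c : Cardinal.{u} := Cardinal.aleph (n + 1 : ℕ) with hcdef
      have hcs : c = Order.succ (Cardinal.aleph n) := by
        rw [hcdef, show (((n : ℕ) + 1 : ℕ) : Ordinal) = Order.succ (n : Ordinal) by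
          push_cast; exact Ordinal.add_one_eq_succ _, Cardinal.aleph_succ]
      -- enough to do it on `c.ord.ToType` and pull back
      have hXle : Cardinal.mk X ≤ Cardinal.mk c.ord.ToType := by
        rw [Cardinal.mk_ord_toType]; exact hX
      obtain ⟨f⟩ := (Cardinal.le_def _ _).mp hXle
      apply myPull f
      have hreg : c.IsRegular := by
        rw [hcs]; exact Cardinal.isRegular_succ (Cardinal.aleph0_le_aleph _)
      have hIio : ∀ a : c.ord.ToType, Cardinal.mk (Set.Iio a) ≤ Cardinal.aleph n := fun a =>
        Order.lt_succ_iff.mp (hcs ▸ Cardinal.mk_Iio_ord_toType a)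
      choose S hS1 hS2 hS3 using fun a : c.ord.ToType => ih (Set.Iio a) (hIio a)
      haveI : Nonempty c.ord.ToType := by
        rw [Ordinal.toType_nonempty_iff_ne_zero]
        intro h0
        have : (0 : Ordinal) < c.ord := by
          rw [Cardinal.lt_ord]
          simpa using (Cardinal.aleph0_pos.trans_le hreg.1)
        exact absurd h0 this.ne'
      refine ⟨⋃ a : c.ord.ToType, (fun B => (Subtype.val '' B : Set c.ord.ToType)) '' S a, ?_, ?_, ?_⟩
      · refine (Cardinal.mk_iUnion_le _).trans ?_
        have h1 : Cardinal.mk c.ord.ToType = c := Cardinal.mk_ord_toType c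
        have h2 : (⨆ a : c.ord.ToType, Cardinal.mk ((fun B => (Subtype.val '' B : Set c.ord.ToType)) '' S a))
            ≤ Cardinal.aleph n := by
          refine ciSup_le' fun a => ?_
          exact (Cardinal.mk_image_le).trans (hS1 a)
        calc Cardinal.mk c.ord.ToType * ⨆ a : c.ord.ToType, Cardinal.mk ((fun B => (Subtype.val '' B : Set c.ord.ToType)) '' S a)
            ≤ c * Cardinal.aleph n := by
              rw [h1]; exact mul_le_mul_right h2 c
          _ ≤ max (max c (Cardinal.aleph n)) Cardinal.aleph0 := Cardinal.mul_le_max _ _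
          _ ≤ c := by
              apply max_le (max_le le_rfl _) hreg.1
              rw [hcs]; exact (Order.lt_succ _).le
      · rintro s hs
        simp only [Set.mem_iUnion, Set.mem_image] at hs
        obtain ⟨a, B, hB, rfl⟩ := hs
        exact (hS2 a B hB).image _
      · intro A hA
        haveI : IsWellOrder c.ord.ToType (· < ·) := isWellOrder_lt
        have hb : Set.Bounded (· < ·) A := by
          apply not_isCofinal_iff.mp
          intro hcof
          refine absurd (Order.cof_le hcof) (not_le.mpr ?_)
          rw [Ordinal.cof_toType]
          have h1 : Cardinal.mk A ≤ Cardinal.aleph0 := Cardinal.le_aleph0_iff_set_countable.mpr hA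
          have h2 : Cardinal.aleph0 < c := by
            rw [hcs]
            exact (Cardinal.aleph0_le_aleph n).trans_lt (Order.lt_succ _)
          exact h1.trans_lt (h2.trans_le hreg.2)
        obtain ⟨a, ha⟩ := hb
        obtain ⟨B, hB, hAB⟩ := hS3 a (Subtype.val ⁻¹' A) (hA.preimage Subtype.val_injective)
        refine ⟨Subtype.val '' B, ?_, ?_⟩
        · exact Set.mem_iUnion.mpr ⟨a, Set.mem_image_of_mem _ hB⟩
        · intro x hx
          exact ⟨⟨x, ha x hx⟩, hAB hx, rfl⟩

lemma myLower {X : Type u} (hX : Cardinal.aleph0 < Cardinal.mk X)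
    (S : Set {A : Set X // A.Countable ∧ A.Infinite})
    (hS : ∀ a, ∃ b ∈ S, a ≤ b) : Cardinal.mk X ≤ Cardinal.mk S := by
  haveI hinf : Infinite X := Cardinal.infinite_iff.mpr hX.le
  let g := Infinite.natEmbedding X
  have hcover : (⋃ B : S, ((B : {A : Set X // A.Countable ∧ A.Infinite}) : Set X)) = Set.univ := by
    rw [Set.eq_univ_iff_forall]
    intro x
    have hc : (insert x (Set.range g)).Countable := (Set.countable_range g).insert x
    have hi : (insert x (Set.range g)).Infinite :=
      (Set.infinite_range_of_injective g.injective).mono (Set.subset_insert x _)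
    obtain ⟨b, hb, hle⟩ := hS ⟨insert x (Set.range g), hc, hi⟩
    have : x ∈ (b : Set X) := hle (Set.mem_insert x _)
    exact Set.mem_iUnion.mpr ⟨⟨b, hb⟩, this⟩
  have hcard : Cardinal.mk X ≤ Cardinal.mk S * Cardinal.aleph0 := by
    calc Cardinal.mk X = Cardinal.mk (Set.univ : Set X) := (Cardinal.mk_univ).symm
      _ = Cardinal.mk (⋃ B : S, ((B : {A : Set X // A.Countable ∧ A.Infinite}) : Set X)) := by
          rw [hcover]
      _ ≤ Cardinal.mk S * ⨆ B : S,
            Cardinal.mk ((B : {A : Set X // A.Countable ∧ A.Infinite}) : Set X) :=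
          Cardinal.mk_iUnion_le _
      _ ≤ Cardinal.mk S * Cardinal.aleph0 := by
          apply mul_le_mul_right
          rcases isEmpty_or_nonempty S with h | h
          · simp [ciSup_of_empty]
          · refine ciSup_le' fun B => ?_
            haveI := (B : {A : Set X // A.Countable ∧ A.Infinite}).2.1.to_subtype
            exact Cardinal.mk_le_aleph0
  by_contra hle
  push_neg at hle
  have h1 : Cardinal.mk S * Cardinal.aleph0 ≤ max (Cardinal.mk S) Cardinal.aleph0 :=
    (Cardinal.mul_le_max _ _).trans (by rw [max_assoc, max_self])
  exact absurd (hcard.trans h1) (not_le.mpr (max_lt hle hX))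

/-- `cof([ℵ_n]^ℵ₀) = ℵ_n` for `n ≥ 1`. -/
theorem ctblCof_aleph_nat (n : ℕ) (hn : 1 ≤ n) :
    ctblCof (Quotient.out (Cardinal.aleph n)) = Cardinal.aleph n := by
  classical
  set X := Quotient.out (Cardinal.aleph n) with hXdef
  have hmk : Cardinal.mk X = Cardinal.aleph n := Cardinal.mk_out _
  have h0 : Cardinal.aleph0 < Cardinal.aleph n := by
    rw [← Cardinal.aleph_zero]
    exact Cardinal.aleph_lt_aleph.mpr (by exact_mod_cast hn)
  haveI : Infinite X := Cardinal.infinite_iff.mpr (by rw [hmk]; exact h0.le)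
  obtain ⟨S, hS1, hS2, hS3⟩ := myKey n X hmk.le
  let g := Infinite.natEmbedding X
  have hrc : (Set.range g).Countable := Set.countable_range g
  have hri : (Set.range g).Infinite := Set.infinite_range_of_injective g.injective
  let F : S → {A : Set X // A.Countable ∧ A.Infinite} := fun B =>
    ⟨↑B ∪ Set.range g, (hS2 ↑B B.2).union hrc, hri.mono Set.subset_union_right⟩
  have hT : ∀ a : {A : Set X // A.Countable ∧ A.Infinite}, ∃ b ∈ Set.range F, a ≤ b := by
    intro a
    obtain ⟨B, hB, hAB⟩ := hS3 a.val a.prop.1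
    refine ⟨F ⟨B, hB⟩, Set.mem_range_self _, ?_⟩
    exact fun x hx => Set.mem_union_left _ (hAB hx)
  rw [ctblCof, poCof]
  apply le_antisymm
  · have hmem : Cardinal.mk (Set.range F) ∈
        {c | ∃ S : Set {A : Set X // A.Countable ∧ A.Infinite},
          (∀ a, ∃ b ∈ S, a ≤ b) ∧ Cardinal.mk S = c} := ⟨Set.range F, hT, rfl⟩
    exact (csInf_le' hmem).trans (Cardinal.mk_range_le.trans hS1)
  · refine le_csInf ⟨_, Set.range F, hT, rfl⟩ ?_
    rintro b ⟨S', hS', rfl⟩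
    rw [← hmk]
    exact myLower (by rw [hmk]; exact h0) S' hS'
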